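/- Let G' be obtained from G by adding a vertex a adjacent to N ⊆ V. Every maximal clique of G either remains a maximal clique of G' or is contained in N and extends (by adding a) to a maximal clique of G'; in particular the set of maximal cliques of G' equals {C : C maximal clique of G, C ⊄ N} ∪ {C ∪ {a} : C maximal clique of G[N]} (where G[N] denotes the induced subgraph on N). -/

import Mathlib

/-- The graph obtained from `G` by adding one new vertex (`none`) adjacent exactly to the
vertices in `N`. -/
def extGraph {V : Type} (G : SimpleGraph V) (N : Set V) : SimpleGraph (Option V) where
  Adj x y :=
    match x, y with
    | some v, some w => G.Adj v w
    | some v, none => v ∈ N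
    | none, some w => w ∈ N
    | none, none => False
  symm := by
    constructor
    rintro (_ | v) (_ | w) h
    · exact h
    · exact h
    · exact h
    · exact h.symm
  loopless := by
    constructor
    rintro (_ | v) h
    · exact h
    · exact G.loopless.irrefl v h

/-- A maximal clique of a graph, as a vertex set. -/
def IsMaxCliqueSet {V : Type} (G : SimpleGraph V) (C : Set V) : Prop :=
  G.IsClique C ∧ ∀ D : Set V, G.IsClique D → C ⊆ D → D = C

/-- A maximal clique of the subgraph `G[N]` induced on `N`: a clique of `G` contained in
`N`, maximal among cliques contained in `N`. -/
def MaxCliqueWithin {V : Type} (G : SimpleGraph V) (N S : Set V) : Prop :=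
  G.IsClique S ∧ S ⊆ N ∧ ∀ T : Set V, G.IsClique T → T ⊆ N → S ⊆ T → T = S


variable {V : Type} (G : SimpleGraph V) (N : Set V)

lemma ext_clique_image {C : Set V} :
    (extGraph G N).IsClique (some '' C) ↔ G.IsClique C := by
  constructor
  · intro h v hv w hw hne
    exact h (Set.mem_image_of_mem _ hv) (Set.mem_image_of_mem _ hw) (by simpa using hne)
  · rintro h _ ⟨v, hv, rfl⟩ _ ⟨w, hw, rfl⟩ hne
    exact h hv hw (fun e => hne (by rw [e]))

lemma ext_clique_insert {C : Set V} :
    (extGraph G N).IsClique (insert none (some '' C)) ↔ G.IsClique C ∧ C ⊆ N := by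
  constructor
  · intro h
    refine ⟨fun v hv w hw hne => ?_, fun v hv => ?_⟩
    · exact h (Set.mem_insert_of_mem _ (Set.mem_image_of_mem _ hv))
        (Set.mem_insert_of_mem _ (Set.mem_image_of_mem _ hw)) (by simpa using hne)
    · exact h (Set.mem_insert _ _)
        (Set.mem_insert_of_mem _ (Set.mem_image_of_mem _ hv)) (by simp)
  · rintro ⟨hC, hN⟩ x hx y hy hne
    rcases hx with rfl | ⟨v, hv, rfl⟩
    · rcases hy with rfl | ⟨w, hw, rfl⟩
      · exact absurd rfl hne
      · exact hN hw
    · rcases hy with rfl | ⟨w, hw, rfl⟩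
      · exact hN hv
      · exact hC hv hw (fun e => hne (by rw [e]))

lemma ext_decomp_notmem {D : Set (Option V)} (h : none ∉ D) :
    D = some '' (some ⁻¹' D) := by
  ext x; cases x with
  | none => simp [h]
  | some v => simp

lemma ext_decomp_mem {D : Set (Option V)} (h : none ∈ D) :
    D = insert none (some '' (some ⁻¹' D)) := by
  ext x; cases x with
  | none => simp [h]
  | some v => simp


lemma ext_maxA {C : Set V} (hC : IsMaxCliqueSet G C) (hnN : ¬ C ⊆ N) :
    IsMaxCliqueSet (extGraph G N) (some '' C) := by
  refine ⟨(ext_clique_image G N).2 hC.1, fun D hD hsub => ?_⟩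
  have hnone : none ∉ D := by
    intro hn
    exact hnN (fun v hv => hD hn (hsub (Set.mem_image_of_mem _ hv)) (by simp))
  have hdec := ext_decomp_notmem (V := V) hnone
  rw [hdec] at hD ⊢
  have hcl : G.IsClique (some ⁻¹' D) := (ext_clique_image G N).1 hD
  have hCsub : C ⊆ some ⁻¹' D := fun v hv => hsub (Set.mem_image_of_mem _ hv)
  rw [hC.2 _ hcl hCsub]

lemma ext_maxB {C : Set V} (hC : MaxCliqueWithin G N C) :
    IsMaxCliqueSet (extGraph G N) (insert none (some '' C)) := by
  obtain ⟨h1, h2, h3⟩ := hC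
  refine ⟨(ext_clique_insert G N).2 ⟨h1, h2⟩, fun D hD hsub => ?_⟩
  have hn : none ∈ D := hsub (Set.mem_insert _ _)
  have hdec := ext_decomp_mem (V := V) hn
  rw [hdec] at hD ⊢
  obtain ⟨hcl, hNsub⟩ := (ext_clique_insert G N).1 hD
  have hCsub : C ⊆ some ⁻¹' D := fun v hv =>
    hsub (Set.mem_insert_of_mem _ (Set.mem_image_of_mem _ hv))
  rw [h3 _ hcl hNsub hCsub]


/-- Every maximal clique of `G` either remains a maximal clique of the extended graph `G'`
or is contained in `N` and extends (by the new vertex `a = none`) to a maximal clique of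
`G'`; moreover the maximal cliques of `G'` are exactly the maximal cliques of `G` not
contained in `N` together with the sets `C ∪ {a}` for `C` a maximal clique of `G[N]`. -/
theorem maxCliques_of_extended_graph
    {V : Type} (G : SimpleGraph V) (N : Set V) :
    (∀ C : Set V, IsMaxCliqueSet G C →
      IsMaxCliqueSet (extGraph G N) (some '' C) ∨
        (C ⊆ N ∧ IsMaxCliqueSet (extGraph G N) (insert none (some '' C))))
    ∧ (∀ C' : Set (Option V), IsMaxCliqueSet (extGraph G N) C' ↔
        ((∃ C : Set V, IsMaxCliqueSet G C ∧ ¬ C ⊆ N ∧ C' = some '' C)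
          ∨ (∃ C : Set V, MaxCliqueWithin G N C ∧ C' = insert none (some '' C)))) := by
  constructor
  · intro C hC
    by_cases hN : C ⊆ N
    · exact Or.inr ⟨hN, ext_maxB G N ⟨hC.1, hN, fun T hT _ hCT => hC.2 T hT hCT⟩⟩
    · exact Or.inl (ext_maxA G N hC hN)
  · intro C'
    constructor
    · intro hC'
      by_cases hn : none ∈ C'
      · right
        have hdec := ext_decomp_mem (V := V) hn
        obtain ⟨hcl, hNsub⟩ := (ext_clique_insert G N).1 (hdec ▸ hC'.1)
        refine ⟨some ⁻¹' C', ⟨hcl, hNsub, fun T hT hTN hsub => ?_⟩, hdec⟩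
        have hbig : (extGraph G N).IsClique (insert none (some '' T)) :=
          (ext_clique_insert G N).2 ⟨hT, hTN⟩
        have hsub' : C' ⊆ insert none (some '' T) := by
          rw [hdec]
          exact Set.insert_subset_insert (Set.image_mono (f := _) hsub)
        have := hC'.2 _ hbig hsub'
        rw [hdec] at this
        ext v
        have h2 : (some v : Option V) ∈ insert none (some '' T) ↔
            (some v : Option V) ∈ insert none (some '' (some ⁻¹' C')) := by rw [this]
        simpa using h2
      · left
        have hdec := ext_decomp_notmem (V := V) hn
        have hcl : G.IsClique (some ⁻¹' C') := (ext_clique_image G N).1 (hdec ▸ hC'.1)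
        refine ⟨some ⁻¹' C', ⟨hcl, fun D hD hsub => ?_⟩, ?_, hdec⟩
        · have hbig : (extGraph G N).IsClique (some '' D) := (ext_clique_image G N).2 hD
          have hsub' : C' ⊆ some '' D := by
            rw [hdec]; exact Set.image_mono (f := _) hsub
          have := hC'.2 _ hbig hsub'
          rw [hdec] at this
          exact (Set.image_injective.2 (Option.some_injective V)) this
        · intro hCN
          have hbig : (extGraph G N).IsClique (insert none C') := by
            rw [hdec]
            exact (ext_clique_insert G N).2 ⟨hcl, hCN⟩
          have := hC'.2 _ hbig (Set.subset_insert _ _)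
          exact hn (this ▸ Set.mem_insert _ _)
    · rintro (⟨C, hC, hnN, rfl⟩ | ⟨C, hC, rfl⟩)
      · exact ext_maxA G N hC hnN
      · exact ext_maxB G N hC
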